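/- Suppose that for some natural number t and positive integer b, the b-th cyclotomic polynomial Φ_b(x) divides R_t(x) in ℤ[x]. Then 4 does not divide b. -/

import Mathlib

set_option maxRecDepth 1000000
set_option maxHeartbeats 4000000

open Polynomial

/-- The polynomial `R_t(x)`. -/
noncomputable def Rpoly (t : ℕ) : Polynomial ℤ :=
  X ^ (8 * t + 15) + X ^ (8 * t + 14) + X ^ (8 * t + 11) - X ^ (8 * t + 10) - X ^ (8 * t + 8)
    + 2 * X ^ (6 * t + 9) - X ^ (4 * t + 15) - X ^ (4 * t + 11) - X ^ (4 * t + 9)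
    + 2 * X ^ (4 * t + 8) - 2 * X ^ (4 * t + 7) + X ^ (4 * t + 6) + X ^ (4 * t + 4)
    + X ^ (4 * t) - 2 * X ^ (2 * t + 6) + X ^ 7 + X ^ 5 - X ^ 4 - X - 1

namespace NotFourAux

/-- The key degree-34 factor. -/
def g1 {A : Type*} [CommRing A] (x : A) : A := (1) + (2) * x + (-1) * x ^ 2 + (-10) * x ^ 3 + (-25) * x ^ 4 + (-58) * x ^ 5 + (-114) * x ^ 6 + (-182) * x ^ 7 + (-255) * x ^ 8 + (-302) * x ^ 9 + (-230) * x ^ 10 + (-38) * x ^ 11 + (136) * x ^ 12 + (160) * x ^ 13 + (117) * x ^ 14 + (222) * x ^ 15 + (483) * x ^ 16 + (640) * x ^ 17 + (483) * x ^ 18 + (222) * x ^ 19 + (117) * x ^ 20 + (160) * x ^ 21 + (136) * x ^ 22 + (-38) * x ^ 23 + (-230) * x ^ 24 + (-302) * x ^ 25 + (-255) * x ^ 26 + (-182) * x ^ 27 + (-114) * x ^ 28 + (-58) * x ^ 29 + (-25) * x ^ 30 + (-10) * x ^ 31 + (-1) * x ^ 32 + (2) * x ^ 33 + x ^ 34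

/-- Even part of `R_t` (in `y = x^2`). -/
noncomputable def Epoly (t : ℕ) : Polynomial ℤ :=
  X ^ (4 * t + 7) - X ^ (4 * t + 5) - X ^ (4 * t + 4) + 2 * X ^ (2 * t + 4) + X ^ (2 * t + 3)
    + X ^ (2 * t + 2) + X ^ (2 * t) - 2 * X ^ (t + 3) - X ^ 2 - 1

/-- Odd part of `R_t` (in `y = x^2`). -/
noncomputable def Opoly (t : ℕ) : Polynomial ℤ :=
  X ^ (4 * t + 7) + X ^ (4 * t + 5) + 2 * X ^ (3 * t + 4) - X ^ (2 * t + 7) - X ^ (2 * t + 5)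
    - X ^ (2 * t + 4) - 2 * X ^ (2 * t + 3) + X ^ 3 + X ^ 2 - 1

theorem cert_main {A : Type*} [CommRing A] (x y : A) :
    (((-2) * x ^ 13 + (9) * x ^ 15 + (14) * x ^ 16 + (10) * x ^ 17 + (24) * x ^ 18 + (21) * x ^ 19 + (-39) * x ^ 20 + (-78) * x ^ 21 + (-9) * x ^ 22 + (54) * x ^ 23 + (42) * x ^ 24 + (-91) * x ^ 25 + (-87) * x ^ 26 + (3) * x ^ 27 + (122) * x ^ 28 + (55) * x ^ 29 + (-27) * x ^ 30 + (-35) * x ^ 31 + (24) * x ^ 33 + (-8) * x ^ 34 + (-7) * x ^ 35 + (-4) * x ^ 36 + (8) * x ^ 37 + (-1) * x ^ 39 + (-2) * x ^ 40 + (-2) * x ^ 41 + (-1) * x ^ 42 + (-1) * x ^ 44) + ((2) * x ^ 14 + (-8) * x ^ 16 + (-20) * x ^ 17 + (-12) * x ^ 18 + (4) * x ^ 19 + (22) * x ^ 20 + (-10) * x ^ 21 + (-28) * x ^ 22 + (80) * x ^ 24 + (60) * x ^ 25 + (52) * x ^ 26 + (-36) * x ^ 27 + (-10) * x ^ 28 +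 (-4) * x ^ 29 + (34) * x ^ 30 + (-26) * x ^ 31 + (-58) * x ^ 32 + (-68) * x ^ 33 + (-76) * x ^ 34 + (-18) * x ^ 35 + (-4) * x ^ 36 + (18) * x ^ 37 + (22) * x ^ 38 + (32) * x ^ 39 + (14) * x ^ 40 + (12) * x ^ 41 + (12) * x ^ 42 + (4) * x ^ 43 + (2) * x ^ 45) * y + (x ^ 15 + (-3) * x ^ 17 + (-3) * x ^ 18 + (-8) * x ^ 19 + (-40) * x ^ 20 + (-66) * x ^ 21 + (-21) * x ^ 22 + (31) * x ^ 23 + (36) * x ^ 24 + (-1) * x ^ 25 + (24) * x ^ 26 + (47) * x ^ 27 + (84) * x ^ 28 + (21) * x ^ 29 + (-40) * x ^ 30 + (-19) * x ^ 31 + (35) * x ^ 32 + (51) * x ^ 33 + (12) * x ^ 34 + (-7) * x ^ 35 + (-37) * x ^ 36 + (-27) * x ^ 37 + (-17) * x ^ 38 + (-17) * x ^ 39 + (-3) * x ^ 40 + x ^ 41 + (-3) * x ^ 42 + x ^ 44) * y ^ 2 + ((2) * x ^ 19 + (-10) * x ^ 21 + (-24) * x ^ 22 + (-14) * x ^ 23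 + (-6) * x ^ 24 + (10) * x ^ 25 + (4) * x ^ 26 + (12) * x ^ 27 + (-10) * x ^ 28 + (32) * x ^ 29 + (2) * x ^ 30 + (14) * x ^ 31 + (-8) * x ^ 32 + (6) * x ^ 33 + (20) * x ^ 34 + (28) * x ^ 35 + (28) * x ^ 36 + (-10) * x ^ 37 + (-2) * x ^ 38 + (-20) * x ^ 39 + (-14) * x ^ 40 + (-8) * x ^ 41 + (-10) * x ^ 42 + (-4) * x ^ 43 + (-2) * x ^ 45) * y ^ 3) * (y ^ 4 * x ^ 7 - y ^ 4 * x ^ 5 - y ^ 4 * x ^ 4 + 2 * y ^ 2 * x ^ 4 + y ^ 2 * x ^ 3 + y ^ 2 * x ^ 2 + y ^ 2 - 2 * y * x ^ 3 - x ^ 2 - 1)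
    + (((-1) * x ^ 10 + (3) * x ^ 12 + (7) * x ^ 13 + (9) * x ^ 14 + (21) * x ^ 15 + (25) * x ^ 16 + (23) * x ^ 17 + (13) * x ^ 18 + (-9) * x ^ 19 + (-68) * x ^ 20 + (-59) * x ^ 21 + (-11) * x ^ 22 + (47) * x ^ 23 + (-36) * x ^ 24 + (-75) * x ^ 25 + (-100) * x ^ 26 + (81) * x ^ 27 + (104) * x ^ 28 + (27) * x ^ 29 + (-66) * x ^ 30 + (-37) * x ^ 31 + (55) * x ^ 32 + (58) * x ^ 33 + (44) * x ^ 34 + (-24) * x ^ 35 + (-5) * x ^ 36 + (-7) * x ^ 37 + (-20) * x ^ 38 + (-7) * x ^ 39 + (-2) * x ^ 40 + (-6) * x ^ 41) + ((-2) * x ^ 14 + (8) * x ^ 16 + (18) * x ^ 17 + (10) * x ^ 18 + (14) * x ^ 19 + (-2) * x ^ 20 + (-18) * x ^ 21 + (-24) * x ^ 22 + (68) * x ^ 23 + (62) * x ^ 24 + (2) * x ^ 25 + (-110) * x ^ 26 + (-44) * x ^ 27 + (32) * x ^ 28 + (60) * x ^ 29 + (-42) * x ^ 30 + (-122) * x ^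 31 + (-68) * x ^ 32 + (-16) * x ^ 33 + (14) * x ^ 34 + (2) * x ^ 35 + (30) * x ^ 36 + (32) * x ^ 37 + (28) * x ^ 38 + (20) * x ^ 39 + (8) * x ^ 40 + (4) * x ^ 41 + (4) * x ^ 42) * y + (x ^ 14 + x ^ 15 + (-4) * x ^ 16 + (-12) * x ^ 17 + (-11) * x ^ 18 + (-9) * x ^ 19 + (-16) * x ^ 20 + (-18) * x ^ 21 + (10) * x ^ 22 + (43) * x ^ 23 + (46) * x ^ 24 + (13) * x ^ 25 + (5) * x ^ 26 + (19) * x ^ 27 + (16) * x ^ 28 + (-37) * x ^ 29 + (-47) * x ^ 30 + (-8) * x ^ 31 + (37) * x ^ 32 + (18) * x ^ 33 + (-31) * x ^ 34 + (-37) * x ^ 35 + (-1) * x ^ 36 + (24) * x ^ 37 + (8) * x ^ 38 + (-1) * x ^ 39 + (-1) * x ^ 40 + x ^ 42 + (-1) * x ^ 44) * y ^ 2 + ((2) * x ^ 18 + (2) * x ^ 19 + (-12) * x ^ 20 + (-38) * x ^ 21 + (-26) * x ^ 22 + (28) * x ^ 23 + (54) * x ^ 24 + (-32) * x ^ 26 +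 (-8) * x ^ 27 + (50) * x ^ 28 + (30) * x ^ 29 + (-24) * x ^ 30 + (-56) * x ^ 31 + (20) * x ^ 32 + (68) * x ^ 33 + (36) * x ^ 34 + (-18) * x ^ 35 + (-38) * x ^ 36 + (-22) * x ^ 37 + (-12) * x ^ 38 + (-2) * x ^ 39 + (-8) * x ^ 40 + (4) * x ^ 41 + (8) * x ^ 42 + (2) * x ^ 45) * y ^ 3) * (y ^ 4 * x ^ 7 + y ^ 4 * x ^ 5 + 2 * y ^ 3 * x ^ 4 - y ^ 2 * x ^ 7 - y ^ 2 * x ^ 5 - y ^ 2 * x ^ 4 - 2 * y ^ 2 * x ^ 3 + x ^ 3 + x ^ 2 - 1)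
    = x ^ 10 * (x - 1) ^ 2 * g1 x := by
  simp only [g1]
  ring

theorem cert1 {A : Type*} [CommRing A] (x : A) :
    ((59311300334236936979240) + (-242777596908216503694653) * x + (544866494150669944368546) * x ^ 2 + (-950190525966966802862004) * x ^ 3 + (1500254085358361937627024) * x ^ 4 + (-2008464232772316011050231) * x ^ 5 + (2317327262426528141664582) * x ^ 6 + (-2615660495860763747317207) * x ^ 7 + (2912946835411258315769652) * x ^ 8 + (-2132065043820676912701798) * x ^ 9 + (-179261151806900459282438) * x ^ 10 + (2672034777930211816079218) * x ^ 11 + (-3459140417410282264237216) * x ^ 12 + (2870984191094781196524134) * x ^ 13 + (-3479729937923498466040724) * x ^ 14 + (5855774786279664239763985) * x ^ 15 + (-7422120220979249020412910) * x ^ 16 + (5630954855736121478499196) * x ^ 17 + (-2476563462092727244759150) * x ^ 18 + (847823140304211199871295) * x ^ 19 + (-943078551243991541027084) * x ^ 20 + (607774688986601907351964) * x ^ 21 + (1139409160677325467869444) * x ^ 22 + (-2971739789037253750504442) * x ^ 23 + (3529683613424371976673142) * x ^ 24 + (-2883486220819538961197108) * x ^ 25 + (2016365470594230145924372) * x ^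 26 + (-1238861402337448872290997) * x ^ 27 + (621302198668566116775482) * x ^ 28 + (-264270714333514845403021) * x ^ 29 + (104399967550431398953524) * x ^ 30 + (-9669930424943864328134) * x ^ 31 + (-21265026675135917574314) * x ^ 32 + (10632513337567958787157) * x ^ 33) * g1 x + ((59311300334236936979240) + (242777596908216503694653) * x + (544866494150669944368546) * x ^ 2 + (950190525966966802862004) * x ^ 3 + (1500254085358361937627024) * x ^ 4 + (2008464232772316011050231) * x ^ 5 + (2317327262426528141664582) * x ^ 6 + (2615660495860763747317207) * x ^ 7 + (2912946835411258315769652) * x ^ 8 + (2132065043820676912701798) * x ^ 9 + (-179261151806900459282438) * x ^ 10 + (-2672034777930211816079218) * x ^ 11 + (-3459140417410282264237216) * x ^ 12 + (-2870984191094781196524134) * x ^ 13 + (-3479729937923498466040724) * x ^ 14 + (-5855774786279664239763985) * x ^ 15 + (-7422120220979249020412910) * x ^ 16 + (-5630954855736121478499196) * x ^ 17 + (-2476563462092727244759150) * x ^ 18 + (-847823140304211199871295) * x ^ 19 + (-943078551243991541027084) * x ^ 20 + (-607774688986601907351964) * x ^ 21 + (1139409160677325467869444) * x ^ 22 + (2971739789037253750504442)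 * x ^ 23 + (3529683613424371976673142) * x ^ 24 + (2883486220819538961197108) * x ^ 25 + (2016365470594230145924372) * x ^ 26 + (1238861402337448872290997) * x ^ 27 + (621302198668566116775482) * x ^ 28 + (264270714333514845403021) * x ^ 29 + (104399967550431398953524) * x ^ 30 + (9669930424943864328134) * x ^ 31 + (-21265026675135917574314) * x ^ 32 + (-10632513337567958787157) * x ^ 33) * g1 (-x) = (118622600668473873958480 : A) := by
  simp only [g1]
  ring

theorem cert2 {A : Type*} [CommRing A] (x : A) :
    ((475257678060836287322039261746793675438846156629729292137609113923479623) + (-407456846998110207874014223581475297998719643001143342637791504047849898) * x + (-902586480738002855672389573563974363007989261404693049588821374222977970) * x ^ 2 + (1195241607407677108932347036276253566169694572042479184055807741032464086) * x ^ 3 + (-920984078253542558907226350245998636853741872692836331398218393578084831) * x ^ 4 + (81724183490851739859059769845729280021279284128195343967278784406219808) * x ^ 5 + (3385767380896608975080897821108758758589757198929182122206505964169182384) * x ^ 6 + (-1929210278513263363758842994210533427899312042992108987501874073731958236) * x ^ 7 + (-7388749874852241368067530520016024594481292491843205693040076604282290237) * x ^ 8 + (4495932147258722782960192646461532437647605589282613430690978432911182022)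 * x ^ 9 + (18744960995379760291493508272449496066928811100162097445195616544464124921) * x ^ 10 + (-13449129585357934260093945326063519645014371015154059957632429270204535990) * x ^ 11 + (-35447762443220245962817551173654113177461745447976108149537847946335489697) * x ^ 12 + (28453706632797139772330845863050958645290032702318905830751025005431723608) * x ^ 13 + (52116125120058644388365453750535378429850375040393997784114087460593304298) * x ^ 14 + (-43346629459286504357296135124131090312390133328280595210111444746353475434) * x ^ 15 + (-74734255380387996756044797644910064668831410329358155538195606865647667834) * x ^ 16 + (69124783004175916714990573398629643450424294537569881482172315930853457632) * x ^ 17 + (74284235154747512518808136469682396432044312655773491510683811218388857388) * x ^ 18 + (-75605192774394872782106092344970715879071034942952210157786344383620928590) * x ^ 19 + (-34807002345380454157510447519488564259366470375869236794824170617137148904) * x ^ 20 + (41539836179253114179440958041106085713612850428650727035572238262059702692) * x ^ 21 + (-23053765198895552950404723032134392057897620556316440675924045356284875517) * x ^ 22 + (17767280894352719088410308333088672213621816196842915914746720404608839588) * x ^ 23 + (44944683770231769857372390499878385216071451879786345884759060506458550798) * x ^ 24 + (-43664659512233197052267555982612579741706451302056262065770179835641965456) * x ^ 25 + (-24712064950850880294137816321767939355948700220975246913559255494861737486)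 * x ^ 26 + (19654310766162996431006945829713210918241871550883268613772807510094133220) * x ^ 27 + (24542086480548298089538259594854420914627515849235555301102527897699473274) * x ^ 28 + (-10660327501825837532743125640229628155939787688683681720737188047950436360) * x ^ 29 + (-82889791724425535891210781185509590057478475412753902500682755013422593234) * x ^ 30 + (62442353218473420583408222846466703971908572681135939017022582393266040222) * x ^ 31 + (161163382477736549472422859385843744927849368341849941880910725384711630218) * x ^ 32 + (-149661264291323352149221887681714892190203167001004554216704238348318364522) * x ^ 33 + (-149390620558203683630806960794399437759796680320345160127763661407287592521) * x ^ 34 + (148448582710663995167958277996698485973384180627218123638772072710910412548) * x ^ 35 + (74562884172103053419123353449867324935227743332522107615251509197192347192) * x ^ 36 + (-75596897013610992182570335259672372139698605004497419673865720533544488812) * x ^ 37 + (-23298879044470821967742390533542492274083394082484983424772238750733002512) * x ^ 38 + (19248130437794712506480622214606212175739634882717305054805977573139418428) * x ^ 39 + (34083698094687723374918694656565986741389565109293801907632099841751994941) * x ^ 40 + (-29468138845375720900764025910897962973728839321684691506682100872019050432) * x ^ 41 + (-49119421421553514189648269116807644910599523506673719494199753421283764713) * x ^ 42 + (51371945664681663160364840093139876790408914648034548816713788624095296496)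 * x ^ 43 + (17421729071711557604631580745004657930003099196472726980272400588493027155) * x ^ 44 + (-26102756884320066104423448561707695682425720765397800263041023715297197478) * x ^ 45 + (39958010373091746451933922533558139774407672289915182543380484738289079860) * x ^ 46 + (-30045785507419752931634226346490357730963759615779070878077232593745317974) * x ^ 47 + (-75841627496826681859322626467522865498867518467843848192169978645818757107) * x ^ 48 + (69963800702785921429999051025015098885789152490783486390805714106883356788) * x ^ 49 + (69445028339361762740601371412771682616203563722851374440030281760620272225) * x ^ 50 + (-66293300764811542680752900482880960892910707506872074783607644954534610422) * x ^ 51 + (-51435139846876900926715940061076223612880360804614352100215230167870454119) * x ^ 52 + (49749517594950361347789795610724642129127458072733915762291329471570566320) * x ^ 53 + (34615197344626043646602611898150954692025858406171757631508192633629410190) * x ^ 54 + (-34218112160030752350118364269904895712505250553592417311242941862046295908) * x ^ 55 + (-18626665350828158876676612801865223722848391338378583644760344476963053909) * x ^ 56 + (18798453664268237121866585112705677714019807134862012302127930312797720154) * x ^ 57 + (7919072588822588286304189411542974711219563356817695154539092675786730060) * x ^ 58 + (-7959001530496418701257754797375424545379243143564653554235749778467555628) * x ^ 59 + (-3668113655032876717012975300385375175262580817917174454977551034757502496)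 * x ^ 60 + (3823220134659760175126967158362366003547265791330988844128045819605500142) * x ^ 61 + (823913691356991433255219200095495664005615116184651028343244680364209085) * x ^ 62 + (-977475672932793971556776008694723593723819115190338982461609950570215846) * x ^ 63 + (566719903612252412060239295963262819661736034814251970431907866874765813) * x ^ 64 + (-540479031441994459646362841449910124655828159902757133406095506102937688) * x ^ 65 + (-414042606546550056822722465549332779607180865872461708316556751001366482) * x ^ 66 + (447234129053976410098206584681233454856723497081488844525211904149792668) * x ^ 67) * g1 x + ((36980696839342995637789941557356535141890114595902122926443664824520005) + (-543058509123562366770064299912112052878972670258315241637426723799109348) * x + (2266719246473745550018037165588431704728054933228513272854900825891197399) * x ^ 2 + (3868934269431456534218681904913932510478080533546426010585281195002219490) * x ^ 3 + (10005207054026824685354846284718825992088320933987912459396339661505585087) * x ^ 4 + (18502954955358982099659065332975681623338280825583278164566428674123534556) * x ^ 5 + (37371758788673754346176968503478390684599674762397198852376936381349035240) * x ^ 6 + (49912829340735918654904903979189266165942975433699884362746543868756629952) * x ^ 7 + (68894343456335925470522353217911893236363598084814047610853437138672198937) * x ^ 8 + (68511993935904732767407706067840030969546468402859978121426410734684742338)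 * x ^ 9 + (33237518320907365082831132868353225436536962333513531091035353532094358493) * x ^ 10 + (-16912425614945362843908063626221561107825109305200054641762185760703850332) * x ^ 11 + (-46784573908809623375514457982904840218523191153456267386594068819959443722) * x ^ 12 + (-28918672054361165031696415729931370522078610647583389701469882832248593798) * x ^ 13 + (-32631922690060942246722107671306036719459640000644740987492670278366230788) * x ^ 14 + (-75092940398170871664147483305159895073052857508548683977730479014304943728) * x ^ 15 + (-149520862233369385204007885207488015197248284115679105859938785491214359405) * x ^ 16 + (-144089050853338288501267390960705825655819510506138490559256449492956749406) * x ^ 17 + (-77728995110157160609545261106299782811862880941236502579594296522188036415) * x ^ 18 + (-25428963502489428733610008580771611225658014296023369613320750743159267046) * x ^ 19 + (-28253213060789396540682970011642841178143463004123351054832494106743565679) * x ^ 20 + (-43465456831090177670555543750108658228862235333917990732765987313164204390) * x ^ 21 + (-15473277111392029987717482188971714466970394787677239238099102598973607600) * x ^ 22 + (35548259384130897658106327387256267746171202195828705499027786692695008224) * x ^ 23 + (72190118314211369952208550022129932371188041200029862913504960368641158977) * x ^ 24 + (67308865508499703316107255173484407643678543215037678562649413155117408084) * x ^ 25 + (49751594499467556497924170407600433774095075715785627349303951278306558451)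 * x ^ 26 + (33549411192357343912516195698434278385492044915796143839488949762142718056) * x ^ 27 + (18624426993890671976498069988869781734744536872312316010461655277439669486) * x ^ 28 + (7739410097058464288306870327909247408261006946022576504659211108210861712) * x ^ 29 + (3611685540142145024644448360573290938397442133352657071848111321231232053) * x ^ 30 + (921330115481118163193601187867342229013466394566191705513997103955877984) * x ^ 31 + (-480425651561402763373690703813134130106266128290515980733867057298218854) * x ^ 32 + (-447234129053976410098206584681233454856723497081488844525211904149792668) * x ^ 33) * g1 (-(x ^ 2)) = (512238374900179282959829203304150210580736271225631415064052778747999628 : A) := by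
  simp only [g1]
  ring

theorem R_split (t : ℕ) :
    Rpoly t = expand ℤ 2 (Epoly t) + X * expand ℤ 2 (Opoly t) := by
  simp only [Rpoly, Epoly, Opoly, map_add, map_sub, map_mul, map_pow, map_one, map_ofNat,
    expand_X]
  ring

theorem expand_comp_neg (Q : Polynomial ℤ) :
    (expand ℤ 2 Q).comp (-X) = expand ℤ 2 Q := by
  rw [expand_eq_comp_X_pow, comp_assoc, pow_comp, X_comp, neg_sq]

theorem descend {P Q : Polynomial ℤ} (hP : P.Monic)
    (h : expand ℤ 2 P ∣ expand ℤ 2 Q) : P ∣ Q := by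
  rw [← modByMonic_eq_zero_iff_dvd hP]
  by_contra hr
  have hQ : Q %ₘ P + P * (Q /ₘ P) = Q := modByMonic_add_div Q P
  have e1 := congrArg (expand ℤ 2) hQ
  rw [map_add, map_mul] at e1
  have h2 : expand ℤ 2 P ∣ expand ℤ 2 (Q %ₘ P) := by
    have h3 : expand ℤ 2 (Q %ₘ P) =
        expand ℤ 2 Q - expand ℤ 2 P * expand ℤ 2 (Q /ₘ P) := by
      rw [← e1]; ring
    rw [h3]
    exact dvd_sub h (dvd_mul_right _ _)
  have hne : expand ℤ 2 (Q %ₘ P) ≠ 0 := by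
    rw [Ne, expand_eq_zero (by norm_num)]
    exact hr
  have hle := natDegree_le_of_dvd h2 hne
  rw [natDegree_expand, natDegree_expand] at hle
  have hdlt : (Q %ₘ P).natDegree < P.natDegree :=
    natDegree_lt_natDegree hr (degree_modByMonic_lt Q hP)
  omega

theorem Ebi (t : ℕ) : Epoly t = (X ^ t) ^ 4 * X ^ 7 - (X ^ t) ^ 4 * X ^ 5 - (X ^ t) ^ 4 * X ^ 4 + 2 * (X ^ t) ^ 2 * X ^ 4 + (X ^ t) ^ 2 * X ^ 3 + (X ^ t) ^ 2 * X ^ 2 + (X ^ t) ^ 2 - 2 * (X ^ t) * X ^ 3 - X ^ 2 - 1 := by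
  simp only [Epoly]
  ring

theorem Obi (t : ℕ) : Opoly t = (X ^ t) ^ 4 * X ^ 7 + (X ^ t) ^ 4 * X ^ 5 + 2 * (X ^ t) ^ 3 * X ^ 4 - (X ^ t) ^ 2 * X ^ 7 - (X ^ t) ^ 2 * X ^ 5 - (X ^ t) ^ 2 * X ^ 4 - 2 * (X ^ t) ^ 2 * X ^ 3 + X ^ 3 + X ^ 2 - 1 := by
  simp only [Opoly]
  ring

end NotFourAux

open NotFourAux in
/-- If the `b`-th cyclotomic polynomial divides `R_t(x)` in `ℤ[x]` for a positive
integer `b`, then `4` does not divide `b`. -/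
theorem not_four_dvd_of_cyclotomic_dvd_R (t b : ℕ) (hb : 0 < b)
    (h : Polynomial.cyclotomic b ℤ ∣ Rpoly t) :
    ¬ (4 ∣ b) := by
  intro h4
  obtain ⟨c, rfl⟩ := h4
  have hc : 0 < c := by omega
  have hdvd2 : 2 ∣ 2 * c := ⟨c, rfl⟩
  have hexp' : expand ℤ 2 (cyclotomic (2 * c) ℤ) = cyclotomic (4 * c) ℤ := by
    rw [cyclotomic_expand_eq_cyclotomic Nat.prime_two hdvd2 ℤ]
    congr 1
    omega
  have hprime4 : Prime (cyclotomic (4 * c) ℤ) :=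
    UniqueFactorizationMonoid.irreducible_iff_prime.mp (cyclotomic.irreducible (by omega))
  have hsplit := R_split t
  have hcomp : (Rpoly t).comp (-X) = expand ℤ 2 (Epoly t) - X * expand ℤ 2 (Opoly t) := by
    rw [hsplit, add_comp, mul_comp, X_comp, expand_comp_neg, expand_comp_neg]
    ring
  have hdvd_comp : cyclotomic (4 * c) ℤ ∣ (Rpoly t).comp (-X) := by
    obtain ⟨k, hk⟩ := h
    refine ⟨k.comp (-X), ?_⟩
    rw [hk, mul_comp]
    rw [← hexp', expand_comp_neg, hexp']
  have hnotdvd2 : ¬ cyclotomic (4 * c) ℤ ∣ (2 : Polynomial ℤ) := by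
    intro hdvd
    have hle := natDegree_le_of_dvd hdvd two_ne_zero
    rw [natDegree_cyclotomic, natDegree_ofNat] at hle
    have ht : 0 < (4 * c).totient := Nat.totient_pos.mpr (by omega)
    omega
  have hE2 : cyclotomic (4 * c) ℤ ∣ expand ℤ 2 (Epoly t) := by
    have hsum : cyclotomic (4 * c) ℤ ∣ 2 * expand ℤ 2 (Epoly t) := by
      have hd := dvd_add h hdvd_comp
      have heq : Rpoly t + (Rpoly t).comp (-X) = 2 * expand ℤ 2 (Epoly t) := by
        rw [hcomp, hsplit]; ring
      rwa [heq] at hd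
    rcases hprime4.2.2 _ _ hsum with h' | h'
    · exact absurd h' hnotdvd2
    · exact h'
  have hO2 : cyclotomic (4 * c) ℤ ∣ expand ℤ 2 (Opoly t) := by
    have hdiff : cyclotomic (4 * c) ℤ ∣ 2 * (X * expand ℤ 2 (Opoly t)) := by
      have hd := dvd_sub h hdvd_comp
      have heq : Rpoly t - (Rpoly t).comp (-X) = 2 * (X * expand ℤ 2 (Opoly t)) := by
        rw [hcomp, hsplit]; ring
      rwa [heq] at hd
    have hXo : cyclotomic (4 * c) ℤ ∣ X * expand ℤ 2 (Opoly t) := by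
      rcases hprime4.2.2 _ _ hdiff with h' | h'
      · exact absurd h' hnotdvd2
      · exact h'
    rcases hprime4.2.2 _ _ hXo with h' | h'
    · exfalso
      have hle := natDegree_le_of_dvd h' X_ne_zero
      rw [natDegree_cyclotomic, natDegree_X] at hle
      have hd2 := Nat.dvd_two_of_totient_le_one (by omega) hle
      have := Nat.le_of_dvd (by norm_num) hd2
      omega
    · exact h'
  have hE : cyclotomic (2 * c) ℤ ∣ Epoly t := by
    apply descend (cyclotomic.monic _ ℤ)
    rw [hexp']
    exact hE2
  have hO : cyclotomic (2 * c) ℤ ∣ Opoly t := by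
    apply descend (cyclotomic.monic _ ℤ)
    rw [hexp']
    exact hO2
  have hprime2 : Prime (cyclotomic (2 * c) ℤ) :=
    UniqueFactorizationMonoid.irreducible_iff_prime.mp (cyclotomic.irreducible (by omega))
  have hE' := hE
  rw [Ebi] at hE'
  have hO' := hO
  rw [Obi] at hO'
  have hDdvd : cyclotomic (2 * c) ℤ ∣ (X : Polynomial ℤ) ^ 10 * (X - 1) ^ 2 * g1 X := by
    rw [← cert_main (X : Polynomial ℤ) (X ^ t)]
    exact dvd_add (hE'.mul_left _) (hO'.mul_left _)
  have hsmall : ∀ q : Polynomial ℤ, cyclotomic (2 * c) ℤ ∣ q → q.natDegree = 1 →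
      cyclotomic (2 * c) ℤ = cyclotomic 2 ℤ := by
    intro q hq hdeg
    have hqne : q ≠ 0 := by
      intro h0
      rw [h0, natDegree_zero] at hdeg
      omega
    have hle := natDegree_le_of_dvd hq hqne
    rw [natDegree_cyclotomic, hdeg] at hle
    have hd2 := Nat.dvd_two_of_totient_le_one (by omega) hle
    have hle2 := Nat.le_of_dvd (by norm_num) hd2
    congr 1
    omega
  rw [mul_assoc] at hDdvd
  rcases hprime2.2.2 _ _ hDdvd with hcase | hcase
  · exfalso
    have hX := hprime2.dvd_of_dvd_pow hcase
    have h2 := hsmall X hX natDegree_X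
    rw [h2, cyclotomic_two] at hX
    have hev := eval_dvd (x := (-1 : ℤ)) hX
    simp at hev
  rcases hprime2.2.2 _ _ hcase with hcase2 | hG
  · exfalso
    have hX1 := hprime2.dvd_of_dvd_pow hcase2
    have hne : (X - 1 : Polynomial ℤ) ≠ 0 := by
      have h' := X_sub_C_ne_zero (1 : ℤ)
      rwa [C_1] at h'
    have hdeg1 : (X - 1 : Polynomial ℤ).natDegree = 1 := by
      have h' := natDegree_X_sub_C (1 : ℤ)
      rwa [C_1] at h'
    have h2 := hsmall _ hX1 hdeg1
    rw [h2, cyclotomic_two] at hX1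
    have hev := eval_dvd (x := (-1 : ℤ)) hX1
    simp at hev
  · have hmne : (2 * c : ℕ) ≠ 0 := by omega
    set ζ := Complex.exp (2 * Real.pi * Complex.I / (2 * c : ℕ)) with hζdef
    have hζ : IsPrimitiveRoot ζ (2 * c) := Complex.isPrimitiveRoot_exp (2 * c) hmne
    haveI : NeZero ((2 * c : ℕ) : ℂ) := ⟨Nat.cast_ne_zero.mpr hmne⟩
    have hroot : ∀ μ : ℂ, IsPrimitiveRoot μ (2 * c) → g1 μ = 0 := by
      intro μ hμ
      obtain ⟨k, hk⟩ := hG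
      have h1 : (aeval μ) (g1 (X : Polynomial ℤ)) = g1 μ := by
        simp only [g1, map_add, map_sub, map_mul, map_pow, map_neg, map_one, map_ofNat,
          aeval_X]
      have h2 : (aeval μ) (cyclotomic (2 * c) ℤ) = 0 := by
        rw [aeval_def, ← eval_map, map_cyclotomic]
        exact (isRoot_cyclotomic_iff).mpr hμ
      rw [← h1, hk, map_mul, h2, zero_mul]
    have hpow : ζ ^ (2 * c) = 1 := hζ.pow_eq_one
    have hfac : (ζ ^ c - 1) * (ζ ^ c + 1) = 0 := by
      linear_combination hpow
    have hζc : ζ ^ c = -1 := by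
      rcases mul_eq_zero.mp hfac with h1 | h1
      · exfalso
        exact hζ.pow_ne_one_of_pos_of_lt hc.ne' (by omega) (by linear_combination h1)
      · linear_combination h1
    rcases Nat.even_or_odd c with hce | hco
    · -- c even : use -ζ, a primitive (2c)-th root
      obtain ⟨k, hk⟩ := hce
      have hcop : (c + 1).Coprime (2 * c) := by
        apply Nat.Coprime.mul_right
        · exact (Nat.prime_two.coprime_iff_not_dvd.mpr (by omega)).symm
        · have h' : Nat.Coprime (1 + c) c :=
            Nat.coprime_add_self_left.mpr (Nat.coprime_one_left c)
          rwa [Nat.add_comm] at h'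
      have hξ := hζ.pow_of_coprime (c + 1) hcop
      have hξv : ζ ^ (c + 1) = -ζ := by
        rw [pow_succ, hζc]
        ring
      have h0 : g1 (-ζ) = 0 := by
        rw [← hξv]
        exact hroot _ hξ
      have hcert := cert1 ζ
      rw [hroot ζ hζ, h0, mul_zero, mul_zero, add_zero] at hcert
      norm_num at hcert
    · -- c odd : use -ζ², a primitive (2c)-th root
      obtain ⟨k, hk⟩ := hco
      have hcop : (c + 2).Coprime (2 * c) := by
        apply Nat.Coprime.mul_right
        · exact (Nat.prime_two.coprime_iff_not_dvd.mpr (by omega)).symm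
        · have h' : Nat.Coprime (2 + c) c :=
            Nat.coprime_add_self_left.mpr
              ((Nat.prime_two.coprime_iff_not_dvd).mpr (by omega))
          rwa [Nat.add_comm] at h'
      have hξ := hζ.pow_of_coprime (c + 2) hcop
      have hξv : ζ ^ (c + 2) = -(ζ ^ 2) := by
        rw [pow_add, hζc]
        ring
      have h0 : g1 (-(ζ ^ 2)) = 0 := by
        rw [← hξv]
        exact hroot _ hξ
      have hcert := cert2 ζ
      rw [hroot ζ hζ, h0, mul_zero, mul_zero, add_zero] at hcert
      norm_num at hcert
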